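/- Let s be a multiset of real numbers with card s = n, and let m be a natural number with 1 ≤ m ≤ n − 1. Then the set of multisets reachable from s by exactly m Countdown steps has cardinality at most ∏_{i = n+1−m}^{n} 3·i·(i−1). -/

import Mathlib

/-- A single Countdown step: remove two elements `x, y` (occupying distinct
positions) from the multiset and insert `o(x,y)` for an arithmetic
operation `o ∈ {+, -, *, /}`, division only by a nonzero number. -/
def CountdownStep (s t : Multiset ℝ) : Prop :=
  ∃ (u : Multiset ℝ) (x y r : ℝ), s = x ::ₘ y ::ₘ u ∧ t = r ::ₘ u ∧
    (r = x + y ∨ r = x - y ∨ r = x * y ∨ (y ≠ 0 ∧ r = x / y))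

/-- `CountdownStepN m s t` holds iff `t` is reachable from `s` by exactly `m`
Countdown steps. -/
def CountdownStepN : ℕ → Multiset ℝ → Multiset ℝ → Prop
  | 0 => fun s t => t = s
  | m + 1 => fun s t => ∃ u, CountdownStep s u ∧ CountdownStepN m u t

noncomputable def cdRes (p : Multiset ℝ) (k : ℕ) : ℝ :=
  let a := p.toList.headI
  let b := p.toList.tail.headI
  if k = 0 then a + b else if k = 1 then a * b else if k = 2 then a - b
  else if k = 3 then b - a else if k = 4 then a / b else b / a

lemma pair_toList (x y : ℝ) :
    ({x, y} : Multiset ℝ).toList = [x, y] ∨ ({x, y} : Multiset ℝ).toList = [y, x] := by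
  have hcoe : (({x, y} : Multiset ℝ).toList : Multiset ℝ) = {x, y} :=
    Multiset.coe_toList _
  have hlen : ({x, y} : Multiset ℝ).toList.length = 2 := by
    have := congrArg Multiset.card hcoe
    simpa using this
  rcases l : ({x, y} : Multiset ℝ).toList with _ | ⟨a, _ | ⟨b, _ | ⟨c, l'⟩⟩⟩ <;>
    rw [l] at hlen <;> simp at hlen
  rw [l] at hcoe
  have hcoe' : (a ::ₘ b ::ₘ 0 : Multiset ℝ) = x ::ₘ y ::ₘ 0 := by
    exact hcoe
  rw [Multiset.cons_eq_cons] at hcoe'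
  rcases hcoe' with ⟨hax, h2⟩ | ⟨_, cs, h1, h2⟩
  · left
    have : b = y := by
      have := Multiset.cons_eq_cons.mp h2
      rcases this with ⟨h, _⟩ | ⟨hne, cs, h1, h2⟩
      · exact h
      · exfalso; exact absurd (congrArg Multiset.card h2) (by simp)
    simp [hax, this]
  · right
    have hb : b ::ₘ 0 = x ::ₘ cs := h1
    have hcs : cs = 0 := by
      have := congrArg Multiset.card h1
      simpa using this.symm
    rw [hcs] at h1 h2
    have hay : a = y := by
      have := Multiset.cons_eq_cons.mp h2
      rcases this with ⟨h, _⟩ | ⟨hne, cs', h1', h2'⟩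
      · exact h.symm
      · exfalso; exact absurd (congrArg Multiset.card h2') (by simp)
    have hbx : b = x := by
      have := Multiset.cons_eq_cons.mp h1
      rcases this with ⟨h, _⟩ | ⟨hne, cs', h1', h2'⟩
      · exact h
      · exfalso; exact absurd (congrArg Multiset.card h2') (by simp)
    simp [hay, hbx]

lemma step_cover (s : Multiset ℝ) :
    ∃ F : Finset (Multiset ℝ), {t | CountdownStep s t} ⊆ ↑F ∧
      F.card ≤ 3 * Multiset.card s * (Multiset.card s - 1) ∧
      ∀ t ∈ F, Multiset.card t + 1 = Multiset.card s := by
  classical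
  set n := Multiset.card s with hn
  refine ⟨((Multiset.powersetCard 2 s).toFinset ×ˢ Finset.range 6).image
    (fun q => cdRes q.1 q.2 ::ₘ (s - q.1)), ?_, ?_, ?_⟩
  · rintro t ⟨u, x, y, r, hsu, htu, hr⟩
    have hps : ({x, y} : Multiset ℝ) + u = s := by
      rw [hsu]
      simp [Multiset.insert_eq_cons, Multiset.cons_add, Multiset.singleton_add]
    have hmem : ({x, y} : Multiset ℝ) ∈ Multiset.powersetCard 2 s := by
      rw [Multiset.mem_powersetCard]
      constructor
      · exact hps ▸ Multiset.le_add_right _ _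
      · simp
    have hsub : s - ({x, y} : Multiset ℝ) = u := by
      rw [← hps]; exact add_tsub_cancel_left _ _
    have key : ∃ k < 6, cdRes {x, y} k = r := by
      rcases pair_toList x y with hl | hl <;>
        rcases hr with h | h | h | ⟨hy, h⟩ <;>
        [exact ⟨0, by norm_num, by simp only [cdRes, hl]; simp [h]⟩;
         exact ⟨2, by norm_num, by simp only [cdRes, hl]; simp [h]⟩;
         exact ⟨1, by norm_num, by simp only [cdRes, hl]; simp [h]⟩;
         exact ⟨4, by norm_num, by simp only [cdRes, hl]; simp [h]⟩;
         exact ⟨0, by norm_num, by simp only [cdRes, hl]; simp [h, add_comm]⟩;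
         exact ⟨3, by norm_num, by simp only [cdRes, hl]; simp [h]⟩;
         exact ⟨1, by norm_num, by simp only [cdRes, hl]; simp [h, mul_comm]⟩;
         exact ⟨5, by norm_num, by simp only [cdRes, hl]; simp [h]⟩]
    obtain ⟨k, hk6, hkr⟩ := key
    simp only [Finset.coe_image, Set.mem_image, Finset.mem_coe, Finset.mem_product,
      Multiset.mem_toFinset, Finset.mem_range]
    exact ⟨({x, y}, k), ⟨hmem, hk6⟩, by rw [hkr, hsub, htu]⟩
  · have h1 : (((Multiset.powersetCard 2 s).toFinset ×ˢ Finset.range 6).image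
        (fun q => cdRes q.1 q.2 ::ₘ (s - q.1))).card
        ≤ ((Multiset.powersetCard 2 s).toFinset ×ˢ Finset.range 6).card :=
      Finset.card_image_le
    have h2 : ((Multiset.powersetCard 2 s).toFinset ×ˢ Finset.range 6).card
        = (Multiset.powersetCard 2 s).toFinset.card * 6 := by
      rw [Finset.card_product, Finset.card_range]
    have h3 : (Multiset.powersetCard 2 s).toFinset.card * 6
        ≤ Multiset.card (Multiset.powersetCard 2 s) * 6 :=
      Nat.mul_le_mul_right _ (Multiset.toFinset_card_le _)
    have h4 : Multiset.card (Multiset.powersetCard 2 s) * 6 = n.choose 2 * 6 := by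
      rw [Multiset.card_powersetCard, hn]
    have h5 : n.choose 2 * 6 ≤ 3 * n * (n - 1) := by
      rw [Nat.choose_two_right]
      have h2 : 2 ∣ n * (n - 1) := by
        rcases Nat.eq_zero_or_pos n with h0 | h0
        · simp [h0]
        · have he := Nat.even_mul_succ_self (n - 1)
          have hn' : n - 1 + 1 = n := by omega
          rw [hn'] at he
          simpa [Nat.mul_comm] using he.two_dvd
      obtain ⟨c, hc⟩ := h2
      rw [hc, Nat.mul_div_cancel_left c (by norm_num)]
      calc c * 6 = 3 * (2 * c) := by ring
        _ = 3 * (n * (n - 1)) := by rw [← hc]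
        _ = 3 * n * (n - 1) := (mul_assoc 3 n (n - 1)).symm
        _ ≤ 3 * n * (n - 1) := le_rfl
    omega
  · intro t ht
    simp only [Finset.mem_image, Finset.mem_product, Multiset.mem_toFinset,
      Finset.mem_range] at ht
    obtain ⟨⟨p, k⟩, ⟨hp, _⟩, rfl⟩ := ht
    rw [Multiset.mem_powersetCard] at hp
    have hcard2 : Multiset.card p = 2 := hp.2
    have hle : 2 ≤ n := by
      have := Multiset.card_le_card hp.1
      omega
    have : Multiset.card (s - p) = n - 2 := by
      rw [Multiset.card_sub hp.1, hcard2]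
    simp [this]
    omega

lemma countdown_key : ∀ (m n : ℕ) (s : Multiset ℝ), Multiset.card s = n → m ≤ n - 1 →
    ∃ F : Finset (Multiset ℝ), {t | CountdownStepN m s t} ⊆ ↑F ∧
      F.card ≤ ∏ i ∈ Finset.Icc (n + 1 - m) n, 3 * i * (i - 1) := by
  intro m
  induction m with
  | zero =>
    intro n s hs _
    refine ⟨{s}, ?_, ?_⟩
    · intro t ht
      simp only [Set.mem_setOf_eq, CountdownStepN] at ht
      simp [ht]
    · have : Finset.Icc (n + 1 - 0) n = ∅ := by
        apply Finset.Icc_eq_empty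
        omega
      simp [this]
  | succ m ih =>
    intro n s hs hm
    have hn2 : 2 ≤ n := by omega
    obtain ⟨F₀, hF₀sub, hF₀card, hF₀mem⟩ := step_cover s
    classical
    have IH : ∀ u : Multiset ℝ, Multiset.card u = n - 1 →
        ∃ F : Finset (Multiset ℝ), {t | CountdownStepN m u t} ⊆ ↑F ∧
          F.card ≤ ∏ i ∈ Finset.Icc (n - 1 + 1 - m) (n - 1), 3 * i * (i - 1) := by
      intro u hu
      exact ih (n - 1) u hu (by omega)
    choose G hG1 hG2 using IH
    set G' : Multiset ℝ → Finset (Multiset ℝ) :=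
      fun u => if h : Multiset.card u = n - 1 then G u h else ∅ with hG'
    refine ⟨F₀.biUnion G', ?_, ?_⟩
    · rintro t ⟨u, hsu, hut⟩
      have huF : u ∈ F₀ := hF₀sub hsu
      have hucard : Multiset.card u = n - 1 := by
        have := hF₀mem u huF
        omega
      rw [Finset.coe_biUnion]
      refine Set.mem_biUnion huF ?_
      have : t ∈ (G u hucard : Set (Multiset ℝ)) := hG1 u hucard hut
      simp only [hG', dif_pos hucard]
      exact this
    · set B := ∏ i ∈ Finset.Icc (n - 1 + 1 - m) (n - 1), 3 * i * (i - 1) with hB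
      have hcard : (F₀.biUnion G').card ≤ F₀.card * B := by
        calc (F₀.biUnion G').card ≤ ∑ u ∈ F₀, (G' u).card := Finset.card_biUnion_le
          _ ≤ ∑ _u ∈ F₀, B := by
              apply Finset.sum_le_sum
              intro u hu
              by_cases h : Multiset.card u = n - 1
              · simp only [hG', dif_pos h]; exact hG2 u h
              · simp [hG', dif_neg h]
          _ = F₀.card * B := by rw [Finset.sum_const, smul_eq_mul]
      have hprod : (3 * n * (n - 1)) * B = ∏ i ∈ Finset.Icc (n + 1 - (m + 1)) n,
          3 * i * (i - 1) := by
        have h1 : n + 1 - (m + 1) = n - m := by omega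
        have h2 : n - 1 + 1 - m = n - m := by omega
        have hn1 : n = (n - 1) + 1 := by omega
        rw [h1, hB, h2, hn1, Finset.prod_Icc_succ_top (by omega)]
        have : (n - 1) + 1 - 1 = n - 1 := by omega
        rw [this]
        ring
      calc (F₀.biUnion G').card ≤ F₀.card * B := hcard
        _ ≤ (3 * n * (n - 1)) * B := Nat.mul_le_mul_right _ (hs ▸ hF₀card)
        _ = _ := hprod

theorem countdown_stepN_ncard_le (s : Multiset ℝ) (n m : ℕ)
    (hs : Multiset.card s = n) (hm1 : 1 ≤ m) (hm2 : m ≤ n - 1) :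
    {t : Multiset ℝ | CountdownStepN m s t}.ncard ≤
      ∏ i ∈ Finset.Icc (n + 1 - m) n, 3 * i * (i - 1) := by
  obtain ⟨F, hsub, hcard⟩ := countdown_key m n s hs hm2
  calc {t : Multiset ℝ | CountdownStepN m s t}.ncard
      ≤ (↑F : Set (Multiset ℝ)).ncard := Set.ncard_le_ncard hsub F.finite_toSet
    _ = F.card := Set.ncard_coe_finset F
    _ ≤ _ := hcard
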